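/- arXiv:2402.15353 — 5 statements merged into one kernel-verified Lean document; each statement's English description precedes it below -/
import Mathlib

section
/- For a phase object x ∈ 𝕋^d, writing f^j_0 = |f^j_0| e^{iφ_j} with |f^j_0| > 0 and a^j = d F^{-1}(0, f^j_1, …, f^j_{d−1}), the argument φ_j satisfies for every ℓ ∈ [d] the equation Re(a^j_ℓ) cos(φ_j) + Im(a^j_ℓ) sin(φ_j) = (d² − |a^j_ℓ|² − |f^j_0|²) / (2|f^j_0|). -/
open Complex Finset

noncomputable def dft (d : ℕ) [NeZero d] (x : ZMod d → ℂ) (j : ZMod d) : ℂ :=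
  ∑ k : ZMod d, Complex.exp (-(2 * Real.pi * Complex.I * k.val * j.val / d)) * x k

/-- The Fourier transform of the j-th diagonal x ∘ S_j conj(x). -/
noncomputable def diagDFT (d : ℕ) [NeZero d] (x : ZMod d → ℂ) (j k : ZMod d) : ℂ :=
  dft d (fun ℓ => x ℓ * (starRingEnd ℂ) (x (ℓ + j))) k

/-- a^j_ℓ = Σ_{k≠0} e^{2πi ℓk/d} f^j_k. -/
noncomputable def aVec (d : ℕ) [NeZero d] (x : ZMod d → ℂ) (j ℓ : ZMod d) : ℂ :=
  ∑ k ∈ Finset.univ.erase (0 : ZMod d),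
    Complex.exp (2 * Real.pi * Complex.I * ℓ.val * k.val / d) * diagDFT d x j k


lemma sum_zmod_val {M : Type*} [AddCommMonoid M] (d : ℕ) [NeZero d] (f : ℕ → M) :
    ∑ k : ZMod d, f k.val = ∑ i ∈ Finset.range d, f i := by
  refine Finset.sum_nbij' (i := fun k => k.val) (j := fun i => (i : ZMod d)) ?_ ?_ ?_ ?_ ?_
  · intro k _; simp [Finset.mem_range, ZMod.val_lt]
  · intro i _; simp
  · intro k _; exact ZMod.natCast_rightInverse k
  · intro i hi; exact ZMod.val_natCast_of_lt (Finset.mem_range.mp hi)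
  · intro k _; rfl

lemma root_sum (d : ℕ) [NeZero d] (ℓ m : ZMod d) :
    ∑ k : ZMod d, Complex.exp (2 * Real.pi * Complex.I * ℓ.val * k.val / d)
      * Complex.exp (-(2 * Real.pi * Complex.I * m.val * k.val / d))
    = if m = ℓ then (d : ℂ) else 0 := by
  have hd : (d : ℂ) ≠ 0 := Nat.cast_ne_zero.mpr (NeZero.ne d)
  set c : ℤ := (ℓ.val : ℤ) - m.val with hc
  set ζ : ℂ := Complex.exp (2 * Real.pi * Complex.I * c / d) with hζ
  have hterm : ∀ k : ℕ, Complex.exp (2 * Real.pi * Complex.I * ℓ.val * k / d)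
      * Complex.exp (-(2 * Real.pi * Complex.I * m.val * k / d)) = ζ ^ k := by
    intro k
    rw [← Complex.exp_nat_mul, ← Complex.exp_add]
    congr 1
    push_cast [hc]
    ring
  have hsum : ∑ k : ZMod d, Complex.exp (2 * Real.pi * Complex.I * ℓ.val * k.val / d)
      * Complex.exp (-(2 * Real.pi * Complex.I * m.val * k.val / d))
      = ∑ i ∈ Finset.range d, ζ ^ i := by
    rw [← sum_zmod_val d (fun i => ζ ^ i)]
    exact Finset.sum_congr rfl fun k _ => hterm k.val
  rw [hsum]
  by_cases h : m = ℓ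
  · subst h
    simp [hζ, hc]
  · rw [if_neg h]
    have hζd : ζ ^ d = 1 := by
      rw [← Complex.exp_nat_mul]
      have : (d : ℂ) * (2 * Real.pi * Complex.I * c / d) = c * (2 * Real.pi * Complex.I) := by
        field_simp
      rw [this, Complex.exp_int_mul_two_pi_mul_I]
    have hζ1 : ζ ≠ 1 := by
      intro h1
      rw [hζ, Complex.exp_eq_one_iff] at h1
      obtain ⟨n, hn⟩ := h1
      have hπ : (2 * Real.pi * Complex.I : ℂ) ≠ 0 := by
        simp [Real.pi_ne_zero, Complex.I_ne_zero]
      have hcnd : (c : ℂ) = n * d := by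
        field_simp at hn
        have h2 : (2 * Real.pi * Complex.I) * c = (2 * Real.pi * Complex.I) * (n * d) := by
          linear_combination (2 * Real.pi * Complex.I) * hn
        exact mul_left_cancel₀ hπ h2
      have hcz : c = n * d := by exact_mod_cast hcnd
      have hlb : -(d : ℤ) < c := by
        have := ZMod.val_lt m
        omega
      have hub : c < d := by
        have := ZMod.val_lt ℓ
        omega
      have hdpos : 0 < (d : ℤ) := by exact_mod_cast Nat.pos_of_ne_zero (NeZero.ne d)
      have hn0 : n = 0 := by nlinarith [hcz]
      have hc0 : c = 0 := by rw [hn0] at hcz; simpa using hcz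
      have hvals : ℓ.val = m.val := by omega
      exact h (ZMod.val_injective d hvals).symm
    rw [geom_sum_eq hζ1, hζd, sub_self, zero_div]

lemma inversion (d : ℕ) [NeZero d] (x : ZMod d → ℂ) (j ℓ : ZMod d) :
    (∑ k ∈ Finset.univ.erase (0 : ZMod d),
      Complex.exp (2 * Real.pi * Complex.I * ℓ.val * k.val / d) * diagDFT d x j k)
      + diagDFT d x j 0
    = d * (x ℓ * (starRingEnd ℂ) (x (ℓ + j))) := by
  have h0 : diagDFT d x j 0
      = Complex.exp (2 * Real.pi * Complex.I * ℓ.val * ((0 : ZMod d).val : ℂ) / d)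
        * diagDFT d x j 0 := by
    simp
  rw [h0, Finset.sum_erase_add _ _ (Finset.mem_univ 0)]
  unfold diagDFT dft
  calc ∑ k : ZMod d, Complex.exp (2 * Real.pi * Complex.I * ℓ.val * k.val / d)
        * ∑ m : ZMod d, Complex.exp (-(2 * Real.pi * Complex.I * m.val * k.val / d))
          * (x m * (starRingEnd ℂ) (x (m + j)))
      = ∑ m : ZMod d, (∑ k : ZMod d,
          Complex.exp (2 * Real.pi * Complex.I * ℓ.val * k.val / d)
          * Complex.exp (-(2 * Real.pi * Complex.I * m.val * k.val / d)))
          * (x m * (starRingEnd ℂ) (x (m + j))) := by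
        simp_rw [Finset.mul_sum, Finset.sum_mul]
        rw [Finset.sum_comm]
        simp_rw [mul_assoc]
    _ = ∑ m : ZMod d, (if m = ℓ then (d : ℂ) else 0) * (x m * (starRingEnd ℂ) (x (m + j))) := by
        simp_rw [root_sum]
    _ = d * (x ℓ * (starRingEnd ℂ) (x (ℓ + j))) := by
        simp_rw [ite_mul, zero_mul]
        rw [Finset.sum_ite_eq' Finset.univ ℓ]
        simp

/-- The argument φ_j of f^j_0 solves the linear system \(A^j (\cos φ, \sin φ)^T = …\). -/
theorem phase_linear_system (d : ℕ) [NeZero d] (x : ZMod d → ℂ)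
    (hx : ∀ k : ZMod d, ‖x k‖ = 1) (j : ZMod d)
    (hf0 : diagDFT d x j 0 ≠ 0) :
    ∀ ℓ : ZMod d,
      (aVec d x j ℓ).re * Real.cos (Complex.arg (diagDFT d x j 0))
        + (aVec d x j ℓ).im * Real.sin (Complex.arg (diagDFT d x j 0))
      = ((d : ℝ) ^ 2 - ‖aVec d x j ℓ‖ ^ 2 - ‖diagDFT d x j 0‖ ^ 2)
          / (2 * ‖diagDFT d x j 0‖) := by
  intro ℓ
  set A := aVec d x j ℓ with hA
  set F := diagDFT d x j 0 with hF
  have hinv : A + F = d * (x ℓ * (starRingEnd ℂ) (x (ℓ + j))) := inversion d x j ℓ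
  have habs : ‖A + F‖ = d := by
    rw [hinv]
    simp [norm_mul, Complex.norm_natCast, hx, Complex.norm_conj]
  have hr : 0 < ‖F‖ := norm_pos_iff.mpr hf0
  have hsq : (A.re + F.re) ^ 2 + (A.im + F.im) ^ 2 = (d : ℝ) ^ 2 := by
    have h2 : Complex.normSq (A + F) = (d : ℝ) ^ 2 := by
      rw [← Complex.sq_norm, habs]
    rw [Complex.normSq_apply, Complex.add_re, Complex.add_im] at h2
    nlinarith [h2]
  have hAsq : (‖A‖) ^ 2 = A.re ^ 2 + A.im ^ 2 := by
    rw [Complex.sq_norm, Complex.normSq_apply]; ring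
  have hFsq : (‖F‖) ^ 2 = F.re ^ 2 + F.im ^ 2 := by
    rw [Complex.sq_norm, Complex.normSq_apply]; ring
  rw [Complex.cos_arg hf0, Complex.sin_arg]
  field_simp
  nlinarith [hsq, hAsq, hFsq]
end

section
/- If j is coprime with d and the diagonal x ∘ S_j conj(x) of a phase object x ∈ 𝕋^d is constant with value e^{iφ}, then φ ∈ (2π/d)ℤ, and x is, up to a global phase factor, equal to the vector (e^{2πi k m/d})_{k∈[d]} for some integer m. -/
open Complex Finset


lemma exp_congr_mod (d : ℕ) [NeZero d] {a b : ℤ} (hab : a ≡ b [ZMOD d]) :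
    Complex.exp (2 * Real.pi * Complex.I * a / d)
      = Complex.exp (2 * Real.pi * Complex.I * b / d) := by
  obtain ⟨q, hq⟩ := (Int.ModEq.dvd hab)
  have hd : (d:ℂ) ≠ 0 := Nat.cast_ne_zero.mpr (NeZero.ne d)
  have hb : (b:ℂ) = a + d * q := by
    have h1 : (b:ℤ) = a + d*q := by linarith
    exact_mod_cast congrArg (fun z : ℤ => (z : ℂ)) h1
  rw [hb, mul_add, add_div, Complex.exp_add]
  have h2 : (2 * (Real.pi:ℂ) * Complex.I * ((d:ℂ) * q)) / d
      = q * (2 * Real.pi * Complex.I) := by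
    field_simp
  rw [h2, Complex.exp_int_mul_two_pi_mul_I, mul_one]


/-- If j is coprime with d and the j-th diagonal of a phase object is constant e^{iφ},
then φ ∈ (2π/d)ℤ and x is a modulation vector up to global phase. -/
theorem constant_diagonal_modulation (d : ℕ) [NeZero d] (j : ℕ) (hj : Nat.Coprime j d)
    (x : ZMod d → ℂ) (hx : ∀ k : ZMod d, ‖x k‖ = 1) (φ : ℝ)
    (h : ∀ k : ZMod d, x k * (starRingEnd ℂ) (x (k + (j : ZMod d)))
      = Complex.exp (φ * Complex.I)) :
    (∃ m : ℤ, φ = 2 * Real.pi * m / d)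
    ∧ ∃ (α : ℂ) (m : ℤ), ‖α‖ = 1 ∧
        ∀ k : ZMod d, x k = α * Complex.exp (2 * Real.pi * Complex.I * k.val * m / d) := by
  have hd : (d:ℂ) ≠ 0 := Nat.cast_ne_zero.mpr (NeZero.ne d)
  have hx0 : ∀ k, x k ≠ 0 := by
    intro k h0
    have := hx k; rw [h0] at this; simp at this
  -- step lemma
  have hstep : ∀ k : ZMod d, x (k + (j : ZMod d)) = Complex.exp (-(φ * Complex.I)) * x k := by
    intro k
    have h1 := congrArg (starRingEnd ℂ) (h k)
    simp only [map_mul, RingHom.id_apply, RingHomCompTriple.comp_apply, Complex.conj_conj] at h1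
    have hc : (starRingEnd ℂ) (Complex.exp (↑φ * Complex.I)) = Complex.exp (-(φ * Complex.I)) := by
      rw [← Complex.exp_conj]
      congr 1
      simp [Complex.conj_ofReal]
    rw [hc] at h1
    have h2 : x k * ((starRingEnd ℂ) (x k) * x (k + (j : ZMod d)))
        = x k * Complex.exp (-(φ * Complex.I)) := by rw [h1]
    rw [← mul_assoc, Complex.mul_conj] at h2
    have hn : (Complex.normSq (x k) : ℂ) = 1 := by
      rw [Complex.normSq_eq_norm_sq, hx k]; norm_num
    rw [hn, one_mul] at h2
    rw [h2]; ring
  -- iterate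
  have hiter : ∀ n : ℕ, x ((n * j : ℕ) : ZMod d) = Complex.exp (-(φ * Complex.I)) ^ n * x 0 := by
    intro n
    induction n with
    | zero => simp
    | succ n ih =>
      have hcast : (((n+1) * j : ℕ) : ZMod d) = ((n * j : ℕ) : ZMod d) + (j : ZMod d) := by
        push_cast; ring
      rw [hcast, hstep, ih, pow_succ]; ring
  -- exp(-φI)^d = 1
  have hdint : x ((d * j : ℕ) : ZMod d) = x 0 := by
    congr 1
    push_cast
    simp [ZMod.natCast_self]
  have hpow : Complex.exp (-(φ * Complex.I)) ^ d = 1 := by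
    have := hiter d
    rw [hdint] at this
    have := mul_right_cancel₀ (hx0 0) (this.symm.trans (one_mul (x 0)).symm)
    exact this
  have hexp1 : Complex.exp ((d : ℂ) * -(φ * Complex.I)) = 1 := by
    rw [Complex.exp_nat_mul]; exact hpow
  obtain ⟨n, hn⟩ := Complex.exp_eq_one_iff.mp hexp1
  -- hn : d * -(φ I) = n * (2π I)
  have hφ : (φ : ℝ) = 2 * Real.pi * (-n) / d := by
    have hI : ((d:ℂ) * -(φ:ℂ)) * Complex.I = ((n:ℂ) * (2 * Real.pi)) * Complex.I := by
      linear_combination hn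
    have h3 : ((d:ℂ) * -(φ:ℂ)) = (n:ℂ) * (2 * Real.pi) :=
      mul_right_cancel₀ Complex.I_ne_zero hI
    have h4 : (d:ℝ) * -φ = n * (2 * Real.pi) := by exact_mod_cast h3
    have hdR : (d:ℝ) ≠ 0 := Nat.cast_ne_zero.mpr (NeZero.ne d)
    field_simp
    linarith [h4]
  refine ⟨⟨-n, by push_cast; linarith [hφ]⟩, x 0, n * (((j : ZMod d)⁻¹).val : ℤ), hx 0, ?_⟩
  intro k
  set jinv := ((j : ZMod d))⁻¹ with hjinv
  have hju : (j : ZMod d) * jinv = 1 := ZMod.coe_mul_inv_eq_one j hj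
  set t := (k * jinv).val with ht
  have hkt : ((t * j : ℕ) : ZMod d) = k := by
    push_cast
    rw [ZMod.natCast_val, ZMod.cast_id]
    rw [mul_assoc, mul_comm jinv, hju, mul_one]
  have hxk : x k = Complex.exp (-(φ * Complex.I)) ^ t * x 0 := by
    rw [← hkt]; exact hiter t
  have hbase : Complex.exp (-(φ * Complex.I)) ^ t
      = Complex.exp (2 * Real.pi * Complex.I * (((n * (t : ℤ) : ℤ)) : ℂ) / d) := by
    rw [← Complex.exp_nat_mul]
    congr 1
    rw [hφ]
    push_cast
    field_simp
  have hvmN : t ≡ k.val * jinv.val [MOD d] := by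
    have h5 := ZMod.val_mul k jinv
    unfold Nat.ModEq
    rw [ht, h5]
    exact Nat.mod_mod_of_dvd _ dvd_rfl
  have hvm : (t : ℤ) ≡ (k.val : ℤ) * (jinv.val : ℤ) [ZMOD d] := by
    have h6 : (t : ℤ) ≡ ((k.val * jinv.val : ℕ) : ℤ) [ZMOD (d : ℕ)] :=
      Int.natCast_modEq_iff.mpr hvmN
    push_cast at h6
    exact h6
  have hmod : ((n : ℤ) * (t : ℤ)) ≡ ((k.val : ℤ) * (n * ((jinv.val : ℤ)))) [ZMOD d] := by
    calc ((n : ℤ) * (t : ℤ)) ≡ n * ((k.val : ℤ) * (jinv.val : ℤ)) [ZMOD d] :=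
          hvm.mul_left _
      _ = (k.val : ℤ) * (n * (jinv.val : ℤ)) := by ring
  rw [hxk, hbase, exp_congr_mod d hmod, mul_comm]
  congr 2
  push_cast
  ring
end

section
/- If j is coprime with d, then a phase object x ∈ 𝕋^d is uniquely determined up to global phase by its j-th diagonal: if x, y ∈ 𝕋^d satisfy x ∘ S_j conj(x) = y ∘ S_j conj(y), then x = α y for some α ∈ ℂ with |α| = 1. -/
open Complex Finset

/-- If j is coprime with d, a phase object is determined up to global phase by its j-th diagonal. -/
theorem unique_recovery_coprime (d : ℕ) [NeZero d] (j : ℕ) (hj : Nat.Coprime j d)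
    (x y : ZMod d → ℂ)
    (hx : ∀ k : ZMod d, ‖x k‖ = 1)
    (hy : ∀ k : ZMod d, ‖y k‖ = 1)
    (h : ∀ k : ZMod d,
      x k * (starRingEnd ℂ) (x (k + (j : ZMod d)))
        = y k * (starRingEnd ℂ) (y (k + (j : ZMod d)))) :
    ∃ α : ℂ, ‖α‖ = 1 ∧ ∀ k : ZMod d, x k = α * y k := by
  have hxu : ∀ k, x k * (starRingEnd ℂ) (x k) = 1 := by
    intro k
    rw [Complex.mul_conj, Complex.normSq_eq_norm_sq, hx k]
    norm_num
  have hyu : ∀ k, y k * (starRingEnd ℂ) (y k) = 1 := by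
    intro k
    rw [Complex.mul_conj, Complex.normSq_eq_norm_sq, hy k]
    norm_num
  set r : ZMod d → ℂ := fun k => x k * (starRingEnd ℂ) (y k) with hr
  have hstep : ∀ k, r (k + (j : ZMod d)) = r k := by
    intro k
    have h1 := h k
    have : x k * (starRingEnd ℂ) (x (k + (j : ZMod d)))
        * ((starRingEnd ℂ) (y k) * x (k + (j : ZMod d)))
        = y k * (starRingEnd ℂ) (y (k + (j : ZMod d)))
        * ((starRingEnd ℂ) (y k) * x (k + (j : ZMod d))) := by rw [h1]
    calc r (k + (j : ZMod d))
        = (y k * (starRingEnd ℂ) (y k)) *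
          (x (k + (j : ZMod d)) * (starRingEnd ℂ) (y (k + (j : ZMod d)))) := by
          rw [hyu]; ring
      _ = y k * (starRingEnd ℂ) (y (k + (j : ZMod d)))
          * ((starRingEnd ℂ) (y k) * x (k + (j : ZMod d))) := by ring
      _ = x k * (starRingEnd ℂ) (x (k + (j : ZMod d)))
          * ((starRingEnd ℂ) (y k) * x (k + (j : ZMod d))) := by rw [h1]
      _ = (x (k + (j : ZMod d)) * (starRingEnd ℂ) (x (k + (j : ZMod d))))
          * (x k * (starRingEnd ℂ) (y k)) := by ring
      _ = r k := by rw [hxu]; ring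
  have hiter : ∀ n : ℕ, r ((n : ZMod d) * (j : ZMod d)) = r 0 := by
    intro n
    induction n with
    | zero => simp
    | succ m ih =>
      have : ((m + 1 : ℕ) : ZMod d) * (j : ZMod d)
          = (m : ZMod d) * (j : ZMod d) + (j : ZMod d) := by push_cast; ring
      rw [this, hstep, ih]
  have hall : ∀ k : ZMod d, r k = r 0 := by
    intro k
    have hju : IsUnit (j : ZMod d) := (ZMod.unitOfCoprime j hj).isUnit
    obtain ⟨u, hu⟩ := hju
    set n : ℕ := (k * (↑u⁻¹ : ZMod d)).val with hn
    have hcast : (n : ZMod d) = k * (↑u⁻¹ : ZMod d) := ZMod.natCast_val _ |>.trans (ZMod.cast_id _ _)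
    have : (n : ZMod d) * (j : ZMod d) = k := by
      rw [hcast, ← hu, mul_assoc]
      simp
    rw [← this, hiter]
  refine ⟨r 0, ?_, ?_⟩
  · simp [hr, map_mul, hx 0, hy 0]
  · intro k
    have : r 0 * y k = r k * y k := by rw [hall k]
    rw [this]
    symm
    calc r k * y k = x k * (y k * (starRingEnd ℂ) (y k)) := by rw [hr]; ring
      _ = x k := by rw [hyu]; ring
end

section
/- If j is not coprime with d, then the j-th diagonal does not determine x up to global phase: for every x ∈ ℂ^d there exists x̃ ∈ ℂ^d with x̃ ∘ S_j conj(x̃) = x ∘ S_j conj(x) and |x̃_k| = |x_k| for all k, but x̃ is not a unimodular scalar multiple of x (provided x is nowhere zero). -/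
open Complex Finset

/-- If j is not coprime with d, the j-th diagonal does not determine a nonvanishing
object up to global phase. -/
theorem no_unique_recovery_not_coprime (d : ℕ) [NeZero d] (j : ℕ) (hjd : j < d)
    (hj : 1 < Nat.gcd j d) (x : ZMod d → ℂ) (hx : ∀ k : ZMod d, x k ≠ 0) :
    ∃ xt : ZMod d → ℂ,
      (∀ k : ZMod d,
        xt k * (starRingEnd ℂ) (xt (k + (j : ZMod d)))
          = x k * (starRingEnd ℂ) (x (k + (j : ZMod d))))
      ∧ (∀ k : ZMod d, ‖xt k‖ = ‖x k‖)
      ∧ ¬ ∃ α : ℂ, ‖α‖ = 1 ∧ ∀ k : ZMod d, xt k = α * x k := by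
  set g := Nat.gcd j d with hg
  have hgj : g ∣ j := Nat.gcd_dvd_left j d
  have hgd : g ∣ d := Nat.gcd_dvd_right j d
  have hd1 : 1 < d := lt_of_lt_of_le hj (Nat.le_of_dvd (Nat.pos_of_ne_zero (NeZero.ne d)) hgd)
  set c : ZMod d → ℂ := fun k => if k.val % g = 0 then 1 else -1 with hc
  have hcval : ∀ k, c k = 1 ∨ c k = -1 := by
    intro k; by_cases h : k.val % g = 0 <;> simp [hc, h]
  have hkey : ∀ k : ZMod d, (k + (j : ZMod d)).val % g = k.val % g := by
    intro k
    have hjval : ((j : ZMod d)).val = j := by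
      rw [ZMod.val_natCast_of_lt hjd]
    have hjg : j % g = 0 := Nat.mod_eq_zero_of_dvd hgj
    rw [ZMod.val_add, hjval, Nat.mod_mod_of_dvd _ hgd, Nat.add_mod, hjg]
    simp [Nat.mod_mod_of_dvd]
  refine ⟨fun k => c k * x k, ?_, ?_, ?_⟩
  · intro k
    have h1 : c (k + (j : ZMod d)) = c k := by simp [hc, hkey k]
    rcases hcval k with h | h <;> simp [h1, h, map_mul, mul_comm, mul_left_comm, mul_assoc]
  · intro k
    rcases hcval k with h | h <;> simp [h]
  · rintro ⟨α, hα, hαk⟩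
    have h0 : c 0 = 1 := by simp [hc, ZMod.val_zero]
    have h1 : c 1 = -1 := by
      haveI : Fact (1 < d) := ⟨hd1⟩
      have : (1 : ZMod d).val = 1 := ZMod.val_one d
      simp [hc, this, Nat.one_mod_eq_one.mpr (by omega : g ≠ 1)]
    have e0 : c 0 * x 0 = α * x 0 := hαk 0
    rw [h0, one_mul] at e0
    have hα1 : α = 1 := (mul_right_cancel₀ (hx 0) (by rw [← e0, one_mul])).symm
    have e1 : c 1 * x 1 = α * x 1 := hαk 1
    rw [h1, hα1, one_mul, neg_mul] at e1
    exact hx 1 (by have := e1; linear_combination (-1/2 : ℂ) * this)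
end

section
/- Conjugate-reflection-type ambiguity for even d: let d be even, m ∈ ℤ, ρ ∈ (−π, π), and define x^1, x^2 ∈ ℂ^d by x^q_k = e^{−2πi km/d} for k even and x^q_k = −(−1)^q e^{(−1)^q iρ/2} e^{−2πi km/d} for k odd (q = 1, 2). Then conj(x^1_{−k}) = (−1)^k x^2_k for all k, and for every j ∈ [d] the Fourier coefficients of the j-th diagonals of x^1 and x^2 agree at every nonzero frequency: (F[x^1 ∘ S_j conj(x^1)])_k = (F[x^2 ∘ S_j conj(x^2)])_k for all k ∈ [d] \ {0}. -/
open Complex Finset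

/-- The ambiguity objects x^q (q = 1, 2) from the conjugate-reflection-type negative example. -/
noncomputable def xamb (d : ℕ) [NeZero d] (m : ℤ) (ρ : ℝ) (q : ℕ) (k : ZMod d) : ℂ :=
  if Even k.val then Complex.exp (-(2 * Real.pi * Complex.I * k.val * m / d))
  else -(-1 : ℂ) ^ q * Complex.exp ((-1 : ℂ) ^ q * Complex.I * ρ / 2)
        * Complex.exp (-(2 * Real.pi * Complex.I * k.val * m / d))

/-! ### Auxiliary machinery -/

/-- The normalized exponential `e^{2πi n / d}` for integer `n`. -/
noncomputable def Eamb (d : ℕ) (n : ℤ) : ℂ := Complex.exp (2 * Real.pi * Complex.I * n / d)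

lemma Eamb_add (d : ℕ) (a b : ℤ) : Eamb d (a + b) = Eamb d a * Eamb d b := by
  unfold Eamb; rw [← Complex.exp_add]; congr 1; push_cast; ring

lemma Eamb_shift (d : ℕ) [NeZero d] (b t : ℤ) : Eamb d (b + d * t) = Eamb d b := by
  have hd : (d : ℂ) ≠ 0 := Nat.cast_ne_zero.mpr (NeZero.ne d)
  unfold Eamb
  push_cast
  rw [show 2 * (Real.pi : ℂ) * Complex.I * ((b : ℂ) + (d : ℂ) * (t : ℂ)) / d
      = 2 * (Real.pi : ℂ) * Complex.I * b / d + (t : ℂ) * (2 * Real.pi * Complex.I) by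
    field_simp]
  rw [Complex.exp_add, Complex.exp_int_mul_two_pi_mul_I, mul_one]

lemma Eamb_conj (d : ℕ) (n : ℤ) : (starRingEnd ℂ) (Eamb d n) = Eamb d (-n) := by
  unfold Eamb
  rw [← Complex.exp_conj]
  congr 1
  simp only [map_div₀, map_mul, Complex.conj_I, Complex.conj_ofReal, map_ofNat,
    map_intCast, map_natCast]
  push_cast
  ring

lemma Eamb_zero (d : ℕ) : Eamb d 0 = 1 := by
  unfold Eamb; norm_num

lemma even_mod_amb (d x : ℕ) (hd : Even d) : Even (x % d) ↔ Even x := by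
  conv_rhs => rw [← Nat.div_add_mod x d]
  rw [Nat.even_add]
  simp [Even.mul_right hd]

lemma even_val_add_amb (d : ℕ) [NeZero d] (hd : Even d) (a b : ZMod d) :
    Even ((a + b).val) ↔ (Even a.val ↔ Even b.val) := by
  rw [ZMod.val_add, even_mod_amb _ _ hd, Nat.even_add]

lemma xamb1_eq (d : ℕ) [NeZero d] (m : ℤ) (ρ : ℝ) (k : ZMod d) :
    xamb d m ρ 1 k =
      (if Even k.val then 1 else Complex.exp (-(Complex.I * ρ / 2)))
        * Eamb d (-((k.val : ℤ) * m)) := by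
  have he : Complex.exp (-(2 * Real.pi * Complex.I * k.val * m / d))
      = Eamb d (-((k.val : ℤ) * m)) := by
    unfold Eamb; congr 1; push_cast; ring
  unfold xamb
  split_ifs with h
  · rw [he, one_mul]
  · rw [he, show -(-1 : ℂ) ^ 1 * Complex.exp ((-1 : ℂ) ^ 1 * Complex.I * ρ / 2)
        = Complex.exp (-(Complex.I * ρ / 2)) by
      rw [pow_one, neg_neg, one_mul]; congr 1; ring]

lemma xamb2_eq (d : ℕ) [NeZero d] (m : ℤ) (ρ : ℝ) (k : ZMod d) :
    xamb d m ρ 2 k =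
      (if Even k.val then 1 else -Complex.exp (Complex.I * ρ / 2))
        * Eamb d (-((k.val : ℤ) * m)) := by
  have he : Complex.exp (-(2 * Real.pi * Complex.I * k.val * m / d))
      = Eamb d (-((k.val : ℤ) * m)) := by
    unfold Eamb; congr 1; push_cast; ring
  unfold xamb
  split_ifs with h
  · rw [he, one_mul]
  · rw [he, show -(-1 : ℂ) ^ 2 * Complex.exp ((-1 : ℂ) ^ 2 * Complex.I * ρ / 2)
        = -Complex.exp (Complex.I * ρ / 2) by
      rw [neg_one_sq, one_mul, neg_one_mul]]

lemma sum_exp_eq_zero_amb (d : ℕ) [NeZero d] (k : ZMod d) (hk : k ≠ 0) :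
    ∑ ℓ : ZMod d, Complex.exp (-(2 * Real.pi * Complex.I * ℓ.val * k.val / d)) = 0 := by
  have hdC : (d : ℂ) ≠ 0 := Nat.cast_ne_zero.mpr (NeZero.ne d)
  set z : ℂ := Complex.exp (-(2 * Real.pi * Complex.I * k.val / d)) with hz
  have hzn : ∀ n : ℕ, Complex.exp (-(2 * Real.pi * Complex.I * n * k.val / d)) = z ^ n := by
    intro n
    rw [hz, ← Complex.exp_nat_mul]
    congr 1; push_cast; ring
  have hconv : ∑ ℓ : ZMod d, Complex.exp (-(2 * Real.pi * Complex.I * ℓ.val * k.val / d))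
      = ∑ i ∈ Finset.range d, z ^ i := by
    refine Finset.sum_nbij' (fun ℓ => ℓ.val) (fun i => (i : ZMod d)) ?_ ?_ ?_ ?_ ?_
    · intro a _; exact Finset.mem_range.mpr (ZMod.val_lt a)
    · intro a _; exact Finset.mem_univ _
    · intro a _; exact ZMod.natCast_zmod_val a
    · intro a ha; exact ZMod.val_cast_of_lt (Finset.mem_range.mp ha)
    · intro a _; exact hzn a.val
  have hz1 : z ≠ 1 := by
    intro h
    obtain ⟨n, hn⟩ := Complex.exp_eq_one_iff.mp (hz ▸ h)
    have hI : Complex.I ≠ 0 := Complex.I_ne_zero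
    have hπ : (Real.pi : ℂ) ≠ 0 := Complex.ofReal_ne_zero.mpr Real.pi_ne_zero
    have h2 : (2 * (Real.pi : ℂ) * Complex.I) * (-((k.val : ℂ) / d))
        = (2 * (Real.pi : ℂ) * Complex.I) * n := by
      linear_combination hn
    have h3 : -((k.val : ℂ) / d) = (n : ℂ) :=
      mul_left_cancel₀ (by simp [hπ, hI]) h2
    have h4 : -((k.val : ℝ) / d) = (n : ℝ) :=
      Complex.ofReal_inj.mp (by push_cast; exact h3)
    have hk0 : 0 < k.val := Nat.pos_of_ne_zero (fun h0 => hk ((ZMod.val_eq_zero k).mp h0))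
    have hd0 : (0 : ℝ) < d := by
      exact_mod_cast Nat.pos_of_ne_zero (NeZero.ne d)
    have h5 : (0 : ℝ) < (k.val : ℝ) / d := by positivity
    have h6 : (k.val : ℝ) / d < 1 := (div_lt_one hd0).mpr (by exact_mod_cast ZMod.val_lt k)
    have hn1 : ((n : ℝ)) < 0 := by linarith
    have hn2 : (-1 : ℝ) < n := by linarith
    have hna : n < 0 := by exact_mod_cast hn1
    have hnb : (-1 : ℤ) < n := by exact_mod_cast hn2
    omega
  have hzd : z ^ d = 1 := by
    rw [← hzn d]
    rw [show -(2 * (Real.pi : ℂ) * Complex.I * d * k.val / d)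
        = ((-(k.val : ℤ) : ℤ) : ℂ) * (2 * Real.pi * Complex.I) by
      push_cast; field_simp]
    exact Complex.exp_int_mul_two_pi_mul_I _
  rw [hconv, geom_sum_eq hz1, hzd]
  simp

/-- Conjugate-reflection-type ambiguity for even d: conj(x¹_{−k}) = (−1)^k x²_k, and the
Fourier coefficients of all diagonals of x¹ and x² agree at every nonzero frequency. -/
theorem conj_reflection_ambiguity (d : ℕ) [NeZero d] (hd : Even d) (m : ℤ) (ρ : ℝ)
    (hρ : -Real.pi < ρ ∧ ρ < Real.pi) :
    (∀ k : ZMod d,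
      (starRingEnd ℂ) (xamb d m ρ 1 (-k)) = (-1 : ℂ) ^ k.val * xamb d m ρ 2 k)
    ∧ (∀ j k : ZMod d, k ≠ 0 →
        diagDFT d (xamb d m ρ 1) j k = diagDFT d (xamb d m ρ 2) j k) := by
  constructor
  · intro k
    have hpar : Even ((-k).val) ↔ Even k.val := by
      rw [ZMod.neg_val]
      split_ifs with h0
      · subst h0; simp
      · rw [Nat.even_sub (ZMod.val_lt k).le]
        simp [hd]
    obtain ⟨t, ht⟩ : ∃ t : ℤ, (((-k).val : ℤ)) * m = -((k.val : ℤ) * m) + d * t := by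
      rcases eq_or_ne k 0 with rfl | hk0
      · exact ⟨0, by simp⟩
      · refine ⟨m, ?_⟩
        rw [ZMod.neg_val, if_neg hk0]
        have hle : k.val ≤ d := (ZMod.val_lt k).le
        push_cast [hle]
        ring
    rw [xamb1_eq, xamb2_eq, map_mul]
    rw [show (starRingEnd ℂ) (Eamb d (-(((-k).val : ℤ) * m))) = Eamb d (-((k.val : ℤ) * m)) by
      rw [Eamb_conj, neg_neg, ht, Eamb_shift]]
    by_cases hek : Even k.val
    · rw [if_pos (hpar.mpr hek), if_pos hek, Even.neg_one_pow hek, map_one, one_mul,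
        one_mul]
    · rw [if_neg (fun h => hek (hpar.mp h)), if_neg hek,
        Odd.neg_one_pow (Nat.not_even_iff_odd.mp hek)]
      rw [show (starRingEnd ℂ) (Complex.exp (-(Complex.I * ρ / 2)))
          = Complex.exp (Complex.I * ρ / 2) by
        rw [← Complex.exp_conj]; congr 1
        simp only [map_neg, map_div₀, map_mul, Complex.conj_I, Complex.conj_ofReal, map_ofNat]
        ring]
      ring
  · intro j k hk
    set p : ℂ := Complex.exp (Complex.I * ρ / 2) with hp
    set q' : ℂ := Complex.exp (-(Complex.I * ρ / 2)) with hq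
    have hpq : p * q' = 1 := by
      rw [hp, hq, ← Complex.exp_add, add_neg_cancel, Complex.exp_zero]
    have hcp : (starRingEnd ℂ) p = q' := by
      rw [hp, hq, ← Complex.exp_conj]; congr 1
      simp only [map_div₀, map_mul, Complex.conj_I, Complex.conj_ofReal, map_ofNat]
      ring
    have hcq : (starRingEnd ℂ) q' = p := by
      rw [hp, hq, ← Complex.exp_conj]; congr 1
      simp only [map_neg, map_div₀, map_mul, Complex.conj_I, Complex.conj_ofReal, map_ofNat]
      ring
    have hdiff : ∀ ℓ : ZMod d,
        xamb d m ρ 1 ℓ * (starRingEnd ℂ) (xamb d m ρ 1 (ℓ + j))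
          - xamb d m ρ 2 ℓ * (starRingEnd ℂ) (xamb d m ρ 2 (ℓ + j))
        = (if Even j.val then 0 else p + q') * Eamb d ((j.val : ℤ) * m) := by
      intro ℓ
      obtain ⟨t, ht⟩ : ∃ t : ℤ,
          (((ℓ + j).val : ℤ)) * m = (ℓ.val : ℤ) * m + ((j.val : ℤ) * m + d * t) := by
        refine ⟨-(((ℓ.val + j.val) / d : ℕ) : ℤ) * m, ?_⟩
        have key : (d : ℤ) * (((ℓ.val + j.val) / d : ℕ) : ℤ) + (((ℓ.val + j.val) % d : ℕ) : ℤ)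
            = (ℓ.val : ℤ) + j.val := by exact_mod_cast Nat.div_add_mod (ℓ.val + j.val) d
        rw [ZMod.val_add]
        linear_combination (m : ℤ) * key
      have hEE : Eamb d (-((ℓ.val : ℤ) * m)) * Eamb d (((ℓ + j).val : ℤ) * m)
          = Eamb d ((j.val : ℤ) * m) := by
        rw [ht, Eamb_add, Eamb_shift, ← mul_assoc, ← Eamb_add, neg_add_cancel, Eamb_zero,
          one_mul]
      rw [xamb1_eq, xamb1_eq, xamb2_eq, xamb2_eq, map_mul, map_mul, Eamb_conj, neg_neg]
      have hparadd := even_val_add_amb d hd ℓ j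
      rcases Nat.even_or_odd ℓ.val with hℓ | hℓ <;> rcases Nat.even_or_odd j.val with hj | hj
      · have heven : Even (ℓ + j).val := hparadd.mpr (iff_of_true hℓ hj)
        simp only [if_pos hℓ, if_pos heven, if_pos hj, map_one, one_mul, zero_mul]
        ring
      · have hodd : ¬Even (ℓ + j).val := fun h =>
          (Nat.not_even_iff_odd.mpr hj) ((hparadd.mp h).mp hℓ)
        simp only [if_pos hℓ, if_neg hodd, if_neg (Nat.not_even_iff_odd.mpr hj), one_mul,
          map_neg, ← hp, ← hq, hcq, hcp]
        linear_combination (p + q') * hEE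
      · have hodd : ¬Even (ℓ + j).val := fun h =>
          (Nat.not_even_iff_odd.mpr hℓ) ((hparadd.mp h).mpr hj)
        simp only [if_neg (Nat.not_even_iff_odd.mpr hℓ), if_neg hodd, if_pos hj, map_neg,
          ← hp, ← hq, hcq, hcp, zero_mul]
        ring
      · have heven : Even (ℓ + j).val :=
          hparadd.mpr (iff_of_false (Nat.not_even_iff_odd.mpr hℓ) (Nat.not_even_iff_odd.mpr hj))
        simp only [if_neg (Nat.not_even_iff_odd.mpr hℓ), if_neg (Nat.not_even_iff_odd.mpr hj),
          if_pos heven, map_one, one_mul]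
        linear_combination (p + q') * hEE
    have hsum0 := sum_exp_eq_zero_amb d k hk
    simp only [diagDFT, dft]
    rw [← sub_eq_zero, ← Finset.sum_sub_distrib]
    rw [Finset.sum_congr rfl (fun ℓ _ => by rw [← mul_sub, hdiff ℓ])]
    rw [← Finset.sum_mul, hsum0, zero_mul]
end
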